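/- Let xs < xt be integers, C ≥ 0 a real number, and f : ℤ → ℝ a function satisfying the Ameso(C) condition on [xs,xt]. Suppose there exist x0 ∈ [xs,xt] and a positive integer b with x0 + b ≤ xt such that (a) f(x0) = min over y ∈ [x0, x0+b] of f(y), and (b) f(x0) + C ≤ max over y ∈ [x0, x0+b] of f(y). Let z be the largest element of [x0, x0+b] at which f attains its maximum over [x0, x0+b]. Then 2·z > 2·x0 + b (i.e., z lies in the right half-open interval (x0 + b/2, x0 + b]). -/
import Mathlib


/-- Ceiling of `(x+y)/2` as a rational. -/
def mceil (x y : ℤ) : ℤ := ⌈((x : ℚ) + (y : ℚ)) / 2⌉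

/-- Floor of `(x+y)/2` as a rational. -/
def mfloor (x y : ℤ) : ℤ := ⌊((x : ℚ) + (y : ℚ)) / 2⌋

/-- Lemma 2: if `f(x0)` is the minimum of `f` on `[x0, x0+b]` and
`f(x0) + C ≤ max_{[x0, x0+b]} f`, then the largest maximizer `z` of `f` on `[x0, x0+b]`
lies in the right half `(x0 + b/2, x0 + b]`, i.e. `2z > 2x0 + b`. -/
theorem ameso_rightnarrow_local
    (xs xt : ℤ) (hxst : xs < xt) (C : ℝ) (hC : 0 ≤ C) (f : ℤ → ℝ)
    (hAmeso : ∀ x ∈ Finset.Icc xs xt, ∀ y ∈ Finset.Icc xs xt,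
      f x + f y + C ≥ f (mceil x y) + f (mfloor x y))
    (x0 : ℤ) (hx0l : xs ≤ x0) (hx0r : x0 ≤ xt)
    (b : ℤ) (hb : 0 < b) (hbt : x0 + b ≤ xt)
    (hmin : f x0 = (Finset.Icc x0 (x0 + b)).inf' (Finset.nonempty_Icc.2 (by omega)) f)
    (hmax : f x0 + C ≤ (Finset.Icc x0 (x0 + b)).sup' (Finset.nonempty_Icc.2 (by omega)) f)
    (z : ℤ) (hz : z ∈ Finset.Icc x0 (x0 + b))
    (hzmax : f z = (Finset.Icc x0 (x0 + b)).sup' (Finset.nonempty_Icc.2 (by omega)) f)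
    (hzlargest : ∀ w ∈ Finset.Icc x0 (x0 + b), f w = f z → w ≤ z) :
    2 * z > 2 * x0 + b := by
  by_contra h
  push_neg at h
  simp only [Finset.mem_Icc] at hz
  have hne : (Finset.Icc x0 (x0 + b)).Nonempty := Finset.nonempty_Icc.2 (by omega)
  have hfzx0 : f x0 + C ≤ f z := by rw [hzmax]; exact hmax
  rcases eq_or_lt_of_le hz.1 with hzx | hzx
  · -- z = x0 : then C = 0 and f is constant, contradicting largest maximizer
    subst hzx
    have hC0 : C = 0 := le_antisymm (by linarith) hC
    have h1 : f (x0 + b) ≤ f x0 := hzmax ▸ Finset.le_sup' f (Finset.mem_Icc.2 ⟨by omega, le_refl _⟩)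
    have h2 : f x0 ≤ f (x0 + b) := hmin ▸ Finset.inf'_le f (Finset.mem_Icc.2 ⟨by omega, le_refl _⟩)
    have := hzlargest (x0 + b) (Finset.mem_Icc.2 ⟨by omega, le_refl _⟩) (le_antisymm h1 h2)
    omega
  · set y : ℤ := 2 * z - x0 with hy
    have hyI : y ∈ Finset.Icc x0 (x0 + b) := Finset.mem_Icc.2 ⟨by omega, by omega⟩
    have hkey := hAmeso x0 (Finset.mem_Icc.2 ⟨hx0l, hx0r⟩) y
      (Finset.mem_Icc.2 ⟨by omega, by omega⟩)
    have hmid : ((x0 : ℚ) + (y : ℚ)) / 2 = (z : ℚ) := by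
      rw [hy]; push_cast; ring
    have hceil : mceil x0 y = z := by rw [mceil, hmid, Int.ceil_intCast]
    have hfloor : mfloor x0 y = z := by rw [mfloor, hmid, Int.floor_intCast]
    rw [hceil, hfloor] at hkey
    have hyle : f y ≤ f z := hzmax ▸ Finset.le_sup' f hyI
    have hyeq : f y = f z := le_antisymm hyle (by linarith)
    have := hzlargest y hyI hyeq
    omega
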